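/- Let T be a triangulated category with arbitrary (small) coproducts. Then every triangulated subcategory of T closed under coproducts is thick, i.e., closed under direct summands. -/

import Mathlib

open CategoryTheory CategoryTheory.Limits CategoryTheory.Pretriangulated

universe v u

namespace CategoryTheory.Triangulated

/-- The Mathlib (Dec 2024) notion `Triangulated.Subcategory`, removed since; restored verbatim. -/
structure Subcategory (C : Type*) [Category C] [HasZeroObject C] [HasShift C ℤ] [Preadditive C]
    [∀ n : ℤ, (shiftFunctor C n).Additive] [Pretriangulated C] where
  P : C → Prop
  zero' : ∃ (Z : C) (_ : IsZero Z), P Z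
  shift (X : C) (n : ℤ) : P X → P (X⟦n⟧)
  ext₂' (T : Triangle C) (_ : T ∈ distTriang C) : P T.obj₁ → P T.obj₃ → ObjectProperty.isoClosure P T.obj₂

end CategoryTheory.Triangulated

/-- In a triangulated category with all small coproducts, every (strictly
full) triangulated subcategory closed under coproducts is thick, i.e. closed under
direct summands (retracts). -/
theorem localizing_subcategory_is_thick
    (T : Type u) [Category.{v} T] [HasZeroObject T] [HasShift T ℤ] [Preadditive T]
    [∀ n : ℤ, (shiftFunctor T n).Additive] [Pretriangulated T] [IsTriangulated T]
    [HasCoproducts.{v} T]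
    (S : Triangulated.Subcategory T) [ObjectProperty.IsClosedUnderIsomorphisms S.P]
    (hcoprod : ∀ {J : Type v} (f : J → T), (∀ j, S.P (f j)) → S.P (∐ f)) :
    ∀ (X Y : T) (i : Y ⟶ X) (p : X ⟶ Y), i ≫ p = 𝟙 Y → S.P X → S.P Y := by
  intro X Y i p hip hX
  -- the idempotent
  set e : X ⟶ X := p ≫ i with he
  have hip' : ∀ {Z : T} (g : Y ⟶ Z), i ≫ p ≫ g = g := by
    intro Z g; rw [← Category.assoc, hip, Category.id_comp]
  have hpi : ∀ {Z : T} (g : X ⟶ Z), p ≫ i ≫ g = e ≫ g := by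
    intro Z g; rw [← Category.assoc, ← he]
  have hie : ∀ {Z : T} (g : X ⟶ Z), i ≫ e ≫ g = i ≫ g := by
    intro Z g; simp only [he, Category.assoc, hip']
  have hep : ∀ {Z : T} (g : Y ⟶ Z), e ≫ p ≫ g = p ≫ g := by
    intro Z g; rw [he, Category.assoc, hip']
  have hee : ∀ {Z : T} (g : X ⟶ Z), e ≫ e ≫ g = e ≫ g := by
    intro Z g; simp only [he, Category.assoc, hip']
  -- the countable coproduct of copies of X
  set f : ULift.{v} ℕ → T := fun _ => X with hf
  set B : T := ∐ f with hB
  set ι : ℕ → (X ⟶ B) := fun n => Sigma.ι f (ULift.up n) with hι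
  have hBS : S.P B := hcoprod f (fun _ => hX)
  -- two mutually inverse morphisms between `Y ⊞ B` and `B`
  set φ : B ⟶ B := Sigma.desc (fun n => (𝟙 X - e) ≫ ι n.down + e ≫ ι (n.down + 1))
    with hφ
  have hιφ : ∀ n : ℕ, ι n ≫ φ = (𝟙 X - e) ≫ ι n + e ≫ ι (n + 1) := by
    intro n
    simp [hι, hφ]
  set ψ : ℕ → (X ⟶ Y ⊞ B) := fun n =>
    Nat.rec (p ≫ biprod.inl + (𝟙 X - e) ≫ ι 0 ≫ biprod.inr)
      (fun m _ => e ≫ ι m ≫ biprod.inr + (𝟙 X - e) ≫ ι (m + 1) ≫ biprod.inr) n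
    with hψ
  set Ψ : B ⟶ Y ⊞ B := Sigma.desc (fun n => ψ n.down) with hΨ
  have hιΨ : ∀ n : ℕ, ι n ≫ Ψ = ψ n := by
    intro n
    simp [hι, hΨ]
  have hψ0 : ψ 0 = p ≫ biprod.inl + (𝟙 X - e) ≫ ι 0 ≫ biprod.inr := rfl
  have hψs : ∀ m : ℕ, ψ (m + 1) =
      e ≫ ι m ≫ biprod.inr + (𝟙 X - e) ≫ ι (m + 1) ≫ biprod.inr := fun m => rfl
  have hΦΨ : (biprod.desc (i ≫ ι 0) φ : Y ⊞ B ⟶ B) ≫ Ψ = 𝟙 (Y ⊞ B) := by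
    apply biprod.hom_ext'
    · rw [← Category.assoc, biprod.inl_desc, Category.comp_id, Category.assoc, hιΨ 0,
        hψ0]
      simp only [Preadditive.comp_add, Preadditive.comp_sub, Preadditive.sub_comp,
        Preadditive.add_comp, Category.assoc, Category.id_comp, hip', hie]
      abel
    · rw [← Category.assoc, biprod.inr_desc, Category.comp_id]
      apply Sigma.hom_ext
      rintro ⟨n⟩
      show ι n ≫ φ ≫ Ψ = ι n ≫ biprod.inr
      rw [← Category.assoc, hιφ n]
      cases n with
      | zero =>
        simp only [Preadditive.comp_add, Preadditive.comp_sub, Preadditive.sub_comp,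
          Preadditive.add_comp, Category.assoc, Category.id_comp, hιΨ, hψ0, hψs,
          hep, hee]
        abel
      | succ m =>
        simp only [Preadditive.comp_add, Preadditive.comp_sub, Preadditive.sub_comp,
          Preadditive.add_comp, Category.assoc, Category.id_comp, hιΨ, hψs, hee]
        abel
  have hΨΦ : Ψ ≫ (biprod.desc (i ≫ ι 0) φ : Y ⊞ B ⟶ B) = 𝟙 B := by
    apply Sigma.hom_ext
    rintro ⟨n⟩
    show ι n ≫ Ψ ≫ biprod.desc (i ≫ ι 0) φ = ι n ≫ 𝟙 B
    rw [Category.comp_id, ← Category.assoc, hιΨ n]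
    cases n with
    | zero =>
      rw [hψ0]
      simp only [Preadditive.comp_add, Preadditive.comp_sub, Preadditive.sub_comp,
        Preadditive.add_comp, Category.assoc, Category.id_comp, biprod.inl_desc,
        biprod.inr_desc, hιφ, hpi, hee]
      abel
    | succ m =>
      rw [hψs m]
      simp only [Preadditive.comp_add, Preadditive.comp_sub, Preadditive.sub_comp,
        Preadditive.add_comp, Category.assoc, Category.id_comp, biprod.inl_desc,
        biprod.inr_desc, hιφ, hee]
      abel
  -- hence `Y ⊞ B ∈ S`, and also `B ⊞ Y ∈ S`
  have hYB : S.P (Y ⊞ B) :=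
    ObjectProperty.prop_of_iso S.P (⟨Ψ, biprod.desc (i ≫ ι 0) φ, hΨΦ, hΦΨ⟩ : B ≅ Y ⊞ B) hBS
  have hBY : S.P (B ⊞ Y) := ObjectProperty.prop_of_iso S.P (biprod.braiding Y B) hYB
  -- conclude with the split distinguished triangle `B ⟶ B ⊞ Y ⟶ Y`
  obtain ⟨Z, hZ, ⟨eZ⟩⟩ := S.ext₂' _ (rot_of_distTriang _ (binaryBiproductTriangle_distinguished B Y)) hBY (S.shift _ _ hBS)
  exact ObjectProperty.prop_of_iso S.P eZ.symm hZ
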